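/- Let d = 2, n = 4, with positions x_1 = (0,0), x_2 = (2,0), x_3 = (3,−4), x_4 = (2,−2) in ℝ², and directed edge set E = {(1,2), (2,4), (4,3), (3,1), (1,4)}. Define the 8×8 real matrix L_B in 2×2 blocks by (L_B)_{ii} = ∑_{j : (i,j) ∈ E} P(u_{ij}), (L_B)_{ij} = −P(u_{ij}) if (i,j) ∈ E, and (L_B)_{ij} = 0 otherwise, where u_{ij} = (x_j − x_i)/‖x_j − x_i‖ and P(v) = I₂ − v vᵀ. Then L_B has an eigenvalue with strictly negative real part (equivalently, −L_B has an eigenvalue with strictly positive real part). -/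

import Mathlib

open Finset

noncomputable section

/-- The positions `x_1 = (0,0)`, `x_2 = (2,0)`, `x_3 = (3,-4)`, `x_4 = (2,-2)` in `ℝ²`
(0-indexed as agents `0, 1, 2, 3`). -/
def pos13 : Fin 4 → Fin 2 → ℝ := ![![0, 0], ![2, 0], ![3, -4], ![2, -2]]

/-- The directed edge set `{(1,2), (2,4), (4,3), (3,1), (1,4)}` (0-indexed). -/
def edges13 : Finset (Fin 4 × Fin 4) := {(0, 1), (1, 3), (3, 2), (2, 0), (0, 3)}

/-- The bearing `u_{ij} = (x_j - x_i)/‖x_j - x_i‖` as a vector in `ℝ²`. -/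
def u13 (i j : Fin 4) : Fin 2 → ℝ :=
  fun a => (pos13 j a - pos13 i a) / Real.sqrt (∑ b, (pos13 j b - pos13 i b) ^ 2)

/-- The 2×2 projection matrix `P(v) = I₂ - v vᵀ`. -/
def proj13 (v : Fin 2 → ℝ) : Fin 2 → Fin 2 → ℝ :=
  fun a b => (if a = b then 1 else 0) - v a * v b

/-- The directed bearing Laplacian `L_B` as an 8×8 real matrix in 2×2 blocks:
the `(i,i)` block is `∑_{j : (i,j) ∈ E} P(u_{ij})`, the `(i,j)` block is `-P(u_{ij})`
if `(i,j) ∈ E`, and `0` otherwise. -/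
def LB13 : Matrix (Fin 4 × Fin 2) (Fin 4 × Fin 2) ℝ :=
  fun p q =>
    if p.1 = q.1 then
      ∑ k : Fin 4, if (p.1, k) ∈ edges13 then proj13 (u13 p.1 k) p.2 q.2 else 0
    else if (p.1, q.1) ∈ edges13 then -(proj13 (u13 p.1 q.1) p.2 q.2) else 0

/- ----------------- auxiliary material for the proof ----------------- -/

set_option maxHeartbeats 2000000

lemma sq5' (a b : ℝ) : a / Real.sqrt 5 * (b / Real.sqrt 5) = a * b / 5 := by
  rw [div_mul_div_comm, Real.mul_self_sqrt (by norm_num)]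
lemma sq8' (a b : ℝ) : a / Real.sqrt 8 * (b / Real.sqrt 8) = a * b / 8 := by
  rw [div_mul_div_comm, Real.mul_self_sqrt (by norm_num)]
lemma sq4' : Real.sqrt 4 = 2 := by
  rw [show (4:ℝ) = 2^2 by norm_num, Real.sqrt_sq]; norm_num
lemma sq25' : Real.sqrt 25 = 5 := by
  rw [show (25:ℝ) = 5^2 by norm_num, Real.sqrt_sq]; norm_num
lemma isq5' : ((Real.sqrt 5)⁻¹)^2 = 1/5 := by
  rw [inv_pow, Real.sq_sqrt (by norm_num : (0:ℝ) ≤ 5)]; norm_num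
lemma isq8' : ((Real.sqrt 8)⁻¹)^2 = 1/8 := by
  rw [inv_pow, Real.sq_sqrt (by norm_num : (0:ℝ) ≤ 8)]; norm_num

/-- An explicit eigenvector of `LB13` for an eigenvalue `t` which is a root of
the quartic `t^4 - 4t^3 + (11/2)t^2 - (519/250)t - 7/250`
(a factor of the characteristic polynomial of `LB13`). -/
def evec13 (t : ℝ) : Fin 4 × Fin 2 → ℝ := fun p =>
  ![![8388 - 36000*t + 28125*t^2 - 6750*t^3, 441 + 24750*t - 25875*t^2 + 9000*t^3],
    ![6572 + 38750*t - 46500*t^2 + 15500*t^3, 0],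
    ![5580 - 5580*t, 4185 - 4185*t],
    ![6138, 3069]] p.1 p.2

lemma evec_eigen (t : ℝ)
    (hg : t^4 - 4*t^3 + (11/2)*t^2 - (519/250)*t - 7/250 = 0) :
    Matrix.mulVec LB13 (evec13 t) = t • (evec13 t) := by
  funext p
  obtain ⟨i, a⟩ := p
  fin_cases i <;> fin_cases a <;>
    simp only [Matrix.mulVec, dotProduct, Fintype.sum_prod_type, Pi.smul_apply,
      smul_eq_mul, Fin.sum_univ_four, Fin.sum_univ_two]
  all_goals norm_num +decide [LB13, edges13, proj13, u13, pos13, evec13,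
      Fin.sum_univ_four, Fin.sum_univ_two, sq4', sq25', sq5', sq8', isq5', isq8', Prod.ext_iff]
  all_goals simp only [Matrix.cons_val]
  all_goals norm_num [sq4', sq25', sq5', sq8', isq5', isq8']
  all_goals first
    | ring1
    | linear_combination (2790*t - 2790) * isq5'
    | linear_combination (1116 + 11160*t) * isq5'
    | linear_combination (-15750:ℝ)*hg
    | linear_combination (-22250:ℝ)*hg
    | linear_combination (-6750:ℝ)*hg
    | linear_combination (6750:ℝ)*hg
    | linear_combination (9000:ℝ)*hg
    | linear_combination (15500:ℝ)*hg
    | linear_combination (-9000:ℝ)*hg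
    | linear_combination (15750:ℝ)*hg
    | linear_combination (22250:ℝ)*hg
    | linear_combination (-15500:ℝ)*hg

lemma root_exists13 : ∃ t : ℝ, t < 0 ∧
    t^4 - 4*t^3 + (11/2)*t^2 - (519/250)*t - 7/250 = 0 := by
  set f : ℝ → ℝ := fun t => t^4 - 4*t^3 + (11/2)*t^2 - (519/250)*t - 7/250 with hf
  have hc : ContinuousOn f (Set.Icc (-1 : ℝ) 0) := by fun_prop
  have h0 : (0:ℝ) ∈ Set.Icc (f 0) (f (-1)) := by
    constructor <;> norm_num [hf]
  have := intermediate_value_Icc' (by norm_num : (-1:ℝ) ≤ 0) hc h0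
  obtain ⟨t, ht, hft⟩ := this
  refine ⟨t, ?_, hft⟩
  rcases lt_or_eq_of_le ht.2 with h | h
  · exact h
  · exfalso; rw [h] at hft; norm_num [hf] at hft

theorem stmt_13 :
    ∃ μ : ℂ, μ ∈ spectrum ℂ (LB13.map (Complex.ofReal)) ∧ μ.re < 0 := by
  obtain ⟨t, htneg, hg⟩ := root_exists13
  refine ⟨(t : ℂ), ?_, by simpa using htneg⟩
  rw [spectrum.mem_iff]
  intro hU
  set w : Fin 4 × Fin 2 → ℂ := fun p => ((evec13 t p : ℝ) : ℂ) with hw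
  have hvec : Matrix.mulVec (LB13.map (Complex.ofReal)) w = (t : ℂ) • w := by
    funext p
    have := congrFun (evec_eigen t hg) p
    simp only [Matrix.mulVec, dotProduct, Pi.smul_apply, smul_eq_mul] at this ⊢
    simp only [hw, Matrix.map_apply]
    rw [show ∑ x, (Complex.ofReal (LB13 p x)) * ((evec13 t x : ℝ) : ℂ)
        = ((∑ x, LB13 p x * evec13 t x : ℝ) : ℂ) by push_cast; ring]
    rw [this]; push_cast; ring
  have hNw : Matrix.mulVec (algebraMap ℂ (Matrix (Fin 4 × Fin 2) (Fin 4 × Fin 2) ℂ) (t:ℂ)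
      - LB13.map (Complex.ofReal)) w = 0 := by
    rw [Matrix.sub_mulVec, Algebra.algebraMap_eq_smul_one, Matrix.smul_mulVec,
      Matrix.one_mulVec, hvec, sub_self]
  have hw0 : w = 0 := by
    have h1 : (↑hU.unit⁻¹ : Matrix (Fin 4 × Fin 2) (Fin 4 × Fin 2) ℂ)
        * (algebraMap ℂ (Matrix (Fin 4 × Fin 2) (Fin 4 × Fin 2) ℂ) (t:ℂ)
          - LB13.map (Complex.ofReal)) = 1 := hU.val_inv_mul
    calc w = Matrix.mulVec ((↑hU.unit⁻¹ : Matrix (Fin 4 × Fin 2) (Fin 4 × Fin 2) ℂ)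
        * (algebraMap ℂ (Matrix (Fin 4 × Fin 2) (Fin 4 × Fin 2) ℂ) (t:ℂ)
          - LB13.map (Complex.ofReal))) w := by rw [h1, Matrix.one_mulVec]
    _ = Matrix.mulVec (↑hU.unit⁻¹ : Matrix (Fin 4 × Fin 2) (Fin 4 × Fin 2) ℂ)
        (Matrix.mulVec (algebraMap ℂ (Matrix (Fin 4 × Fin 2) (Fin 4 × Fin 2) ℂ) (t:ℂ)
          - LB13.map (Complex.ofReal)) w) := by rw [Matrix.mulVec_mulVec]
    _ = 0 := by rw [hNw, Matrix.mulVec_zero]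
  have : w (3, 0) = 6138 := by simp [hw, evec13]
  rw [hw0] at this
  norm_num at this

end
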